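/- For real x ≥ 1 and y ≥ 2, Buchstab's identity holds: Ψ(x,y) = 1 + Σ_{p ≤ y, p prime} Ψ(x/p, p), where Ψ(x,y) counts the number of y-smooth positive integers ≤ x. -/

import Mathlib

open scoped Classical

/-- A positive integer `n` is `y`-smooth if every prime divisor of `n` is at most `y`. -/
def IsSmooth (y : ℝ) (n : ℕ) : Prop := ∀ p : ℕ, p.Prime → p ∣ n → (p : ℝ) ≤ y

/-- `Psi x y` counts the `y`-smooth positive integers `n ≤ x`. -/
noncomputable def Psi (x y : ℝ) : ℕ := Nat.card {n : ℕ | 1 ≤ n ∧ (n : ℝ) ≤ x ∧ IsSmooth y n}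

/-- largest prime factor -/
noncomputable def mpf (n : ℕ) : ℕ :=
  if h : n.primeFactors.Nonempty then n.primeFactors.max' h else 0

lemma mpf_mem {n : ℕ} (hn : 1 < n) : mpf n ∈ n.primeFactors := by
  have h : n.primeFactors.Nonempty := Nat.nonempty_primeFactors.mpr hn
  simp only [mpf, dif_pos h]
  exact Finset.max'_mem _ h

lemma le_mpf {n q : ℕ} (hq : q ∈ n.primeFactors) : q ≤ mpf n := by
  have h : n.primeFactors.Nonempty := ⟨q, hq⟩
  simp only [mpf, dif_pos h]
  exact Finset.le_max' _ _ hq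

lemma psi_eq (x y : ℝ) (hx : 0 ≤ x) :
    Psi x y = ((Finset.Icc 1 ⌊x⌋₊).filter (IsSmooth y)).card := by
  have hset : {n : ℕ | 1 ≤ n ∧ (n : ℝ) ≤ x ∧ IsSmooth y n}
      = ↑((Finset.Icc 1 ⌊x⌋₊).filter (IsSmooth y)) := by
    ext n
    simp only [Set.mem_setOf_eq, Finset.coe_filter, Finset.mem_Icc, Set.mem_setOf_eq,
      Nat.le_floor_iff hx, and_assoc]
  rw [Psi, hset]
  exact Nat.card_eq_finsetCard _

/-- Buchstab's identity. -/
theorem buchstab (x y : ℝ) (hx : 1 ≤ x) (hy : 2 ≤ y) :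
    Psi x y = 1 + ∑ p ∈ (Finset.range (⌊y⌋₊ + 1)).filter Nat.Prime,
      Psi (x / p) p := by
  have hx0 : (0:ℝ) ≤ x := le_trans zero_le_one hx
  have hy0 : (0:ℝ) ≤ y := le_trans (by norm_num) hy
  set S : Finset ℕ := (Finset.Icc 1 ⌊x⌋₊).filter (IsSmooth y) with hS
  have h1S : 1 ∈ S := by
    refine Finset.mem_filter.mpr ⟨Finset.mem_Icc.mpr ⟨le_refl 1, ?_⟩, ?_⟩
    · exact_mod_cast Nat.le_floor (by exact_mod_cast hx)
    · intro p hp hdvd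
      exact absurd (Nat.dvd_one.mp hdvd) hp.one_lt.ne'
  have hcard : S.card = (S.erase 1).card + 1 := (Finset.card_erase_add_one h1S).symm
  -- fiberwise count
  have hmaps : ∀ n ∈ S.erase 1, mpf n ∈ (Finset.range (⌊y⌋₊ + 1)).filter Nat.Prime := by
    intro n hn
    obtain ⟨hne, hnS⟩ := Finset.mem_erase.mp hn
    obtain ⟨hicc, hsm⟩ := Finset.mem_filter.mp hnS
    obtain ⟨h1, h2⟩ := Finset.mem_Icc.mp hicc
    have hn1 : 1 < n := lt_of_le_of_ne h1 (Ne.symm hne)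
    have hmem := mpf_mem hn1
    have hp : (mpf n).Prime := Nat.prime_of_mem_primeFactors hmem
    have hdvd : mpf n ∣ n := Nat.dvd_of_mem_primeFactors hmem
    refine Finset.mem_filter.mpr ⟨Finset.mem_range.mpr ?_, hp⟩
    have : (mpf n : ℝ) ≤ y := hsm _ hp hdvd
    exact Nat.lt_succ_of_le (Nat.le_floor this)
  have hfiber := Finset.card_eq_sum_card_fiberwise hmaps
  rw [psi_eq x y hx0, ← hS, hcard, hfiber, add_comm]
  congr 1
  apply Finset.sum_congr rfl
  intro p hp
  obtain ⟨hpr, hpp⟩ := Finset.mem_filter.mp hp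
  have hple : p ≤ ⌊y⌋₊ := Nat.lt_succ_iff.mp (Finset.mem_range.mp hpr)
  have hpy : (p : ℝ) ≤ y := le_trans (by exact_mod_cast Nat.le_floor_iff hy0 |>.mp hple) (le_refl y)
  have hp0 : 0 < p := hpp.pos
  have hp0R : (0:ℝ) < p := by exact_mod_cast hp0
  have hxp0 : (0:ℝ) ≤ x / p := div_nonneg hx0 hp0R.le
  rw [psi_eq (x/p) p hxp0]
  apply Finset.card_bij' (fun n _ => n / p) (fun m _ => p * m)
  · -- forward maps
    intro n hn
    obtain ⟨hn', hmpf⟩ := Finset.mem_filter.mp hn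
    obtain ⟨hne, hnS⟩ := Finset.mem_erase.mp hn'
    obtain ⟨hicc, hsm⟩ := Finset.mem_filter.mp hnS
    obtain ⟨h1, h2⟩ := Finset.mem_Icc.mp hicc
    have hn1 : 1 < n := lt_of_le_of_ne h1 (Ne.symm hne)
    have hmem := mpf_mem hn1
    rw [hmpf] at hmem
    have hdvd : p ∣ n := Nat.dvd_of_mem_primeFactors hmem
    refine Finset.mem_filter.mpr ⟨Finset.mem_Icc.mpr ⟨?_, ?_⟩, ?_⟩
    · exact (Nat.one_le_div_iff hp0).mpr (Nat.le_of_dvd (by omega) hdvd)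
    · apply Nat.le_floor
      rw [Nat.cast_div hdvd (by exact_mod_cast hp0.ne')]
      gcongr
      exact (Nat.le_floor_iff hx0).mp h2
    · intro q hq hqd
      have hqn : q ∣ n := hqd.trans (Nat.div_dvd_of_dvd hdvd)
      have : q ≤ p := by
        rw [← hmpf]
        exact le_mpf (Nat.mem_primeFactors.mpr ⟨hq, hqn, by omega⟩)
      exact_mod_cast this
  · -- backward maps
    intro m hm
    obtain ⟨hicc, hsm⟩ := Finset.mem_filter.mp hm
    obtain ⟨h1, h2⟩ := Finset.mem_Icc.mp hicc
    have hmx : (m : ℝ) ≤ x / p := (Nat.le_floor_iff hxp0).mp h2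
    have hnx : ((p * m : ℕ) : ℝ) ≤ x := by
      push_cast
      calc (p:ℝ) * m ≤ p * (x / p) := by
            exact mul_le_mul_of_nonneg_left hmx hp0R.le
        _ = x := mul_div_cancel₀ x hp0R.ne'
    have hsmooth : IsSmooth y (p * m) := by
      intro q hq hqd
      rcases (Nat.Prime.dvd_mul hq).mp hqd with h | h
      · rw [Nat.prime_dvd_prime_iff_eq hq hpp |>.mp h]; exact hpy
      · exact le_trans (hsm q hq h) hpy
    have hmpf : mpf (p * m) = p := by
      have hpm1 : 1 < p * m := by
        have := hpp.two_le; nlinarith [h1]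
      have hpmem : p ∈ (p * m).primeFactors :=
        Nat.mem_primeFactors.mpr ⟨hpp, Dvd.intro m rfl, by omega⟩
      apply le_antisymm
      · have hmem := mpf_mem hpm1
        have hqd := Nat.dvd_of_mem_primeFactors hmem
        have hqp := Nat.prime_of_mem_primeFactors hmem
        rcases (Nat.Prime.dvd_mul hqp).mp hqd with h | h
        · exact le_of_eq ((Nat.prime_dvd_prime_iff_eq hqp hpp).mp h)
        · exact_mod_cast hsm _ hqp h
      · exact le_mpf hpmem
    refine Finset.mem_filter.mpr ⟨Finset.mem_erase.mpr ⟨?_, ?_⟩, hmpf⟩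
    · have := hpp.two_le; nlinarith [h1]
    · refine Finset.mem_filter.mpr ⟨Finset.mem_Icc.mpr ⟨?_, Nat.le_floor hnx⟩, hsmooth⟩
      exact Nat.one_le_iff_ne_zero.mpr (by positivity)
  · -- left inverse
    intro n hn
    obtain ⟨hn', hmpf⟩ := Finset.mem_filter.mp hn
    obtain ⟨hne, hnS⟩ := Finset.mem_erase.mp hn'
    obtain ⟨hicc, _⟩ := Finset.mem_filter.mp hnS
    obtain ⟨h1, _⟩ := Finset.mem_Icc.mp hicc
    have hn1 : 1 < n := lt_of_le_of_ne h1 (Ne.symm hne)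
    have hmem := mpf_mem hn1
    rw [hmpf] at hmem
    exact Nat.mul_div_cancel' (Nat.dvd_of_mem_primeFactors hmem)
  · -- right inverse
    intro m _
    exact Nat.mul_div_cancel_left m hp0
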